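/- Let k be a field, S = k[u,v,t] the polynomial ring in three variables, and I ⊆ S the ideal generated by uv − t², ut − v², and vt − u². Define N : S³ → S by N(r₁, r₂, r₃) = (v² − ut)r₁ + (u² − tv)r₂ + (t² − uv)r₃ and M : S² → S³ by M(s₁, s₂) = (ts₁ + us₂, vs₁ + ts₂, us₁ + vs₂). Then the image of N equals I, the sequence 0 → S² → S³ → S → S/I → 0 (with maps M, N, and the quotient projection) is exact; in particular M is injective, ker N = im M, and S/I has projective dimension 2 over S. -/

import Mathlib

open MvPolynomial

set_option synthInstance.maxHeartbeats 1000000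
set_option maxHeartbeats 1000000

/-- The polynomial ring `S = k[u,v,t]` (`u = X 0`, `v = X 1`, `t = X 2`). -/
abbrev PolyS (k : Type) [Field k] : Type := MvPolynomial (Fin 3) k

/-- The ideal `I = (uv - t², ut - v², vt - u²)` of the triple point. -/
noncomputable def triplePointIdeal (k : Type) [Field k] : Ideal (PolyS k) :=
  Ideal.span {X 0 * X 1 - X 2 ^ 2, X 0 * X 2 - X 1 ^ 2, X 1 * X 2 - X 0 ^ 2}

/-- Let `k` be a field, `S = k[u,v,t]` and
`I = (uv - t², ut - v², vt - u²) ⊆ S`.  Define `N : S³ → S` by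
`N (r₁, r₂, r₃) = (v² - ut) r₁ + (u² - tv) r₂ + (t² - uv) r₃` and `M : S² → S³` by
`M (s₁, s₂) = (t s₁ + u s₂, v s₁ + t s₂, u s₁ + v s₂)`.  Then the image of `N` equals `I`, the
sequence `0 → S² → S³ → S → S/I → 0` (with maps `M`, `N` and the projection) is exact; in
particular `M` is injective, `ker N = im M`, and `S/I` has projective dimension `2` over `S`
(the displayed free resolution has length `2`, and neither `S/I` nor `I` is projective). -/
lemma g3_irred (k : Type) [Field k] : Irreducible ((X 2 : PolyS k) ^ 2 - X 0 * X 1) := by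
  rw [← MulEquiv.irreducible_iff
    ((renameEquiv k (Equiv.swap (0 : Fin 3) 2)).trans (finSuccEquiv k 2))]
  have s0 : Equiv.swap (0 : Fin 3) 2 0 = 2 := Equiv.swap_apply_left _ _
  have s1 : Equiv.swap (0 : Fin 3) 2 1 = 1 := by decide
  have s2 : Equiv.swap (0 : Fin 3) 2 2 = 0 := Equiv.swap_apply_right _ _
  have f0 : (finSuccEquiv k 2) (X (0 : Fin 3)) = Polynomial.X := finSuccEquiv_X_zero
  have f1 : (finSuccEquiv k 2) (X (1 : Fin 3)) = Polynomial.C (X 0) := by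
    rw [show (1 : Fin 3) = Fin.succ 0 from rfl]; exact finSuccEquiv_X_succ
  have f2 : (finSuccEquiv k 2) (X (2 : Fin 3)) = Polynomial.C (X 1) := by
    rw [show (2 : Fin 3) = Fin.succ 1 from rfl]; exact finSuccEquiv_X_succ
  have he : ((renameEquiv k (Equiv.swap (0 : Fin 3) 2)).trans (finSuccEquiv k 2))
      ((X 2 : PolyS k) ^ 2 - X 0 * X 1)
      = Polynomial.X ^ 2 - Polynomial.C ((X 1 : MvPolynomial (Fin 2) k) * X 0) := by
    simp only [AlgEquiv.trans_apply, map_sub, map_pow, map_mul, renameEquiv_apply, rename_X,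
      s0, s1, s2, f0, f1, f2, Polynomial.C_mul]
  rw [he]
  by_contra hq
  have hm : (Polynomial.X ^ 2 - Polynomial.C ((X 1 : MvPolynomial (Fin 2) k) * X 0)).Monic :=
    Polynomial.monic_X_pow_sub_C _ two_ne_zero
  have hd : (Polynomial.X ^ 2
      - Polynomial.C ((X 1 : MvPolynomial (Fin 2) k) * X 0)).natDegree = 2 :=
    Polynomial.natDegree_X_pow_sub_C
  obtain ⟨c1, c2, h0, h1⟩ := (hm.not_irreducible_iff_exists_add_mul_eq_coeff hd).mp hq
  have hc0 : (Polynomial.X ^ 2 - Polynomial.C ((X 1 : MvPolynomial (Fin 2) k) * X 0)).coeff 0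
      = -(X 1 * X 0) := by simp
  have hc1 : (Polynomial.X ^ 2 - Polynomial.C ((X 1 : MvPolynomial (Fin 2) k) * X 0)).coeff 1
      = 0 := by simp
  rw [hc0] at h0; rw [hc1] at h1
  have hc2 : c2 = -c1 := by linear_combination -h1
  subst hc2
  have hc : c1 ^ 2 = X 1 * X 0 := by linear_combination h0
  have h2 : ((aeval ![(1 : Polynomial k), Polynomial.X]) c1) ^ 2 = Polynomial.X := by
    have := congrArg (aeval ![(1 : Polynomial k), Polynomial.X]) hc
    simpa using this
  have := congrArg Polynomial.natDegree h2
  rw [Polynomial.natDegree_pow, Polynomial.natDegree_X] at this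
  omega

lemma g3_prime (k : Type) [Field k] : Prime ((X 2 : PolyS k) ^ 2 - X 0 * X 1) :=
  (UniqueFactorizationMonoid.irreducible_iff_prime).mp (g3_irred k)

lemma g3_ne (k : Type) [Field k] : ((X 2 : PolyS k) ^ 2 - X 0 * X 1) ≠ 0 :=
  (g3_prime k).ne_zero

lemma g3_ndvd_g1 (k : Type) [Field k] :
    ¬ ((X 2 : PolyS k) ^ 2 - X 0 * X 1 ∣ (X 1 : PolyS k) ^ 2 - X 0 * X 2) := by
  rintro ⟨c, hc⟩
  have := congrArg (eval ![0, 1, 0]) hc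
  simp at this

lemma mem_triple_iff (k : Type) [Field k] (f : PolyS k) :
    f ∈ triplePointIdeal k ↔ ∃ a b c : PolyS k,
      f = a * (X 0 * X 1 - X 2 ^ 2) + b * (X 0 * X 2 - X 1 ^ 2) + c * (X 1 * X 2 - X 0 ^ 2) := by
  rw [triplePointIdeal]
  constructor
  · intro h
    rw [Ideal.mem_span_insert] at h
    obtain ⟨a, z, hz, rfl⟩ := h
    rw [Ideal.mem_span_insert] at hz
    obtain ⟨b, w, hw, rfl⟩ := hz
    rw [Ideal.mem_span_singleton'] at hw
    obtain ⟨c, rfl⟩ := hw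
    exact ⟨a, b, c, by ring⟩
  · rintro ⟨a, b, c, rfl⟩
    refine add_mem (add_mem ?_ ?_) ?_ <;>
      exact Ideal.mul_mem_left _ _ (Ideal.subset_span (by simp))

lemma one_notin (k : Type) [Field k] : (1 : PolyS k) ∉ triplePointIdeal k := by
  intro h
  have hle : triplePointIdeal k ≤ RingHom.ker (constantCoeff (σ := Fin 3) (R := k)) := by
    rw [triplePointIdeal, Ideal.span_le]
    intro x hx
    simp only [Set.mem_insert_iff, Set.mem_singleton_iff] at hx
    rcases hx with rfl | rfl | rfl <;> simp [RingHom.mem_ker]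
  have := hle h
  simp [RingHom.mem_ker] at this

lemma A_ne (k : Type) [Field k] : ((X 0 : PolyS k) * X 1 - X 2 ^ 2) ≠ 0 := by
  intro h
  apply g3_ne k
  linear_combination -h

lemma A_mem (k : Type) [Field k] : ((X 0 : PolyS k) * X 1 - X 2 ^ 2) ∈ triplePointIdeal k :=
  (mem_triple_iff k _).mpr ⟨1, 0, 0, by ring⟩
lemma C_mem (k : Type) [Field k] : ((X 1 : PolyS k) * X 2 - X 0 ^ 2) ∈ triplePointIdeal k :=
  (mem_triple_iff k _).mpr ⟨0, 0, 1, by ring⟩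
lemma B_mem (k : Type) [Field k] : ((X 0 : PolyS k) * X 2 - X 1 ^ 2) ∈ triplePointIdeal k :=
  (mem_triple_iff k _).mpr ⟨0, 1, 0, by ring⟩

theorem stmt12 (k : Type) [Field k]
    (N : (Fin 3 → PolyS k) → PolyS k)
    (hN : ∀ r, N r = ((X 1 : PolyS k) ^ 2 - X 0 * X 2) * r 0 +
      ((X 0 : PolyS k) ^ 2 - X 2 * X 1) * r 1 + ((X 2 : PolyS k) ^ 2 - X 0 * X 1) * r 2)
    (M : (Fin 2 → PolyS k) → (Fin 3 → PolyS k))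
    (hM : ∀ s, M s = ![(X 2 : PolyS k) * s 0 + X 0 * s 1,
      (X 1 : PolyS k) * s 0 + X 2 * s 1, (X 0 : PolyS k) * s 0 + X 1 * s 1]) :
    -- the image of `N` is `I`, i.e. the sequence is exact at `S` (the kernel of
    -- `S → S/I` being `I`)
    (∀ f : PolyS k, f ∈ triplePointIdeal k ↔ ∃ r, N r = f) ∧
    -- exactness at `S²`: `M` is injective
    Function.Injective M ∧
    -- exactness at `S³`: `ker N = im M`
    (∀ r : Fin 3 → PolyS k, N r = 0 ↔ ∃ s, M s = r) ∧
    -- `S/I` has projective dimension `2` over `S`: together with the above length-two free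
    -- resolution, this amounts to `S/I` and `I` not being projective
    ¬ Module.Projective (PolyS k) (PolyS k ⧸ triplePointIdeal k) ∧
    ¬ Module.Projective (PolyS k) (triplePointIdeal k) := by
  refine ⟨?_, ?_, ?_, ?_, ?_⟩
  · intro f
    rw [mem_triple_iff]
    constructor
    · rintro ⟨a, b, c, rfl⟩
      refine ⟨![-b, -c, -a], ?_⟩
      rw [hN]
      simp only [Matrix.cons_val_zero, Matrix.cons_val_one, Matrix.head_cons,
        Matrix.cons_val_two, Matrix.tail_cons]
      ring
    · rintro ⟨r, rfl⟩
      rw [hN]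
      exact ⟨-(r 2), -(r 0), -(r 1), by ring⟩
  · intro s s' h
    rw [hM, hM] at h
    have h0 := congrFun h 0
    have h1 := congrFun h 1
    simp only [Matrix.cons_val_zero, Matrix.cons_val_one, Matrix.head_cons] at h0 h1
    have e0 : s 0 = s' 0 := by
      have hz : ((X 2 : PolyS k) ^ 2 - X 0 * X 1) * (s 0 - s' 0) = 0 := by
        linear_combination (X 2 : PolyS k) * h0 - (X 0 : PolyS k) * h1
      have := (mul_eq_zero.mp hz).resolve_left (g3_ne k)
      linear_combination this
    have e1 : s 1 = s' 1 := by
      have hz : ((X 2 : PolyS k) ^ 2 - X 0 * X 1) * (s 1 - s' 1) = 0 := by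
        linear_combination (X 2 : PolyS k) * h1 - (X 1 : PolyS k) * h0
      have := (mul_eq_zero.mp hz).resolve_left (g3_ne k)
      linear_combination this
    funext i
    fin_cases i
    · exact e0
    · exact e1
  · intro r
    constructor
    · intro hr
      rw [hN] at hr
      have hda : ((X 2 : PolyS k) ^ 2 - X 0 * X 1) ∣
          ((X 1 : PolyS k) ^ 2 - X 0 * X 2) * (X 2 * r 0 - X 0 * r 1) :=
        ⟨X 1 * r 1 - X 2 * r 2, by linear_combination (X 2 : PolyS k) * hr⟩
      have hdb : ((X 2 : PolyS k) ^ 2 - X 0 * X 1) ∣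
          ((X 1 : PolyS k) ^ 2 - X 0 * X 2) * (X 2 * r 1 - X 1 * r 0) :=
        ⟨X 1 * r 2 - X 0 * r 1, by linear_combination (-(X 1 : PolyS k)) * hr⟩
      obtain ⟨s0, hs0⟩ := ((g3_prime k).dvd_or_dvd hda).resolve_left (g3_ndvd_g1 k)
      obtain ⟨s1, hs1⟩ := ((g3_prime k).dvd_or_dvd hdb).resolve_left (g3_ndvd_g1 k)
      refine ⟨![s0, s1], ?_⟩
      rw [hM]
      simp only [Matrix.cons_val_zero, Matrix.cons_val_one, Matrix.head_cons]
      funext i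
      fin_cases i
      · show (X 2 : PolyS k) * s0 + X 0 * s1 = r 0
        apply mul_left_cancel₀ (g3_ne k)
        linear_combination (-(X 2 : PolyS k)) * hs0 - (X 0 : PolyS k) * hs1
      · show (X 1 : PolyS k) * s0 + X 2 * s1 = r 1
        apply mul_left_cancel₀ (g3_ne k)
        linear_combination (-(X 1 : PolyS k)) * hs0 - (X 2 : PolyS k) * hs1
      · show (X 0 : PolyS k) * s0 + X 1 * s1 = r 2
        apply mul_left_cancel₀ (g3_ne k)
        linear_combination (-(X 0 : PolyS k)) * hs0 - (X 1 : PolyS k) * hs1 - hr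
    · rintro ⟨s, rfl⟩
      rw [hN, hM]
      simp only [Matrix.cons_val_zero, Matrix.cons_val_one, Matrix.head_cons,
        Matrix.cons_val_two, Matrix.tail_cons]
      ring
  · intro hproj
    obtain ⟨h, hh⟩ := Module.projective_lifting_property ((triplePointIdeal k).mkQ)
      (LinearMap.id) (Submodule.mkQ_surjective _)
    set e : PolyS k := h (Submodule.Quotient.mk 1) with he
    have he1 : Submodule.Quotient.mk (p := triplePointIdeal k) e = Submodule.Quotient.mk 1 :=
      LinearMap.congr_fun hh (Submodule.Quotient.mk 1)
    have hsm : ((X 0 : PolyS k) * X 1 - X 2 ^ 2) •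
        (Submodule.Quotient.mk (1 : PolyS k) : PolyS k ⧸ triplePointIdeal k) = 0 := by
      rw [← Submodule.Quotient.mk_smul, smul_eq_mul, mul_one, Submodule.Quotient.mk_eq_zero]
      exact A_mem k
    have hAe : ((X 0 : PolyS k) * X 1 - X 2 ^ 2) * e = 0 := by
      have := congrArg h hsm
      rw [map_smul, map_zero] at this
      rw [smul_eq_mul] at this
      exact this
    have he0 : e = 0 := (mul_eq_zero.mp hAe).resolve_left (A_ne k)
    apply one_notin k
    rw [← Submodule.Quotient.mk_eq_zero, ← he1, he0]
    simp
  · intro hproj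
    let F0 : (Fin 3 → PolyS k) →ₗ[PolyS k] PolyS k :=
      { toFun := fun r => r 0 * (X 0 * X 1 - X 2 ^ 2) + r 1 * (X 0 * X 2 - X 1 ^ 2) + r 2 * (X 1 * X 2 - X 0 ^ 2)
        map_add' := by intro x y; simp only [Pi.add_apply]; ring
        map_smul' := by intro m x; simp only [Pi.smul_apply, smul_eq_mul, RingHom.id_apply]; ring }
    have hF0 : ∀ r, F0 r ∈ triplePointIdeal k := fun r =>
      (mem_triple_iff k _).mpr ⟨r 0, r 1, r 2, rfl⟩
    let F : (Fin 3 → PolyS k) →ₗ[PolyS k] triplePointIdeal k :=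
      (F0).codRestrict (triplePointIdeal k) hF0
    have hFsurj : Function.Surjective F := by
      rintro ⟨y, hy⟩
      obtain ⟨a, b, c, rfl⟩ := (mem_triple_iff k y).mp hy
      refine ⟨![a, b, c], Subtype.ext ?_⟩
      show F0 ![a, b, c] = _
      show (![a, b, c] 0) * (X 0 * X 1 - X 2 ^ 2) + (![a, b, c] 1) * (X 0 * X 2 - X 1 ^ 2)
        + (![a, b, c] 2) * (X 1 * X 2 - X 0 ^ 2) = _
      simp only [Matrix.cons_val_zero, Matrix.cons_val_one, Matrix.head_cons,
        Matrix.cons_val_two, Matrix.tail_cons]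
    obtain ⟨σ, hσ⟩ := Module.projective_lifting_property F LinearMap.id hFsurj
    have key : ∀ x y : triplePointIdeal k, (x : PolyS k) • σ y = (y : PolyS k) • σ x := by
      intro x y
      rw [← map_smul, ← map_smul]
      congr 1
      exact Subtype.ext (mul_comm _ _)
    set yA : triplePointIdeal k := ⟨X 0 * X 1 - X 2 ^ 2, A_mem k⟩
    set yB : triplePointIdeal k := ⟨X 0 * X 2 - X 1 ^ 2, B_mem k⟩
    have hsum : (σ yA 0) * (X 0 * X 1 - X 2 ^ 2) + (σ yA 1) * (X 0 * X 2 - X 1 ^ 2)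
        + (σ yA 2) * (X 1 * X 2 - X 0 ^ 2) = X 0 * X 1 - X 2 ^ 2 := by
      have := LinearMap.congr_fun hσ yA
      have := congrArg Subtype.val this
      simpa [F, F0] using this
    have hdvd : ∀ i, ((X 2 : PolyS k) ^ 2 - X 0 * X 1) ∣ σ yA i := by
      intro i
      have hk := congrFun (key yB yA) i
      simp only [Pi.smul_apply, smul_eq_mul] at hk
      have hdvd' : ((X 2 : PolyS k) ^ 2 - X 0 * X 1) ∣ ((X 0 : PolyS k) * X 2 - X 1 ^ 2) * σ yA i := by
        refine ⟨-(σ yB i), ?_⟩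
        rw [hk]; ring
      rcases (g3_prime k).dvd_or_dvd hdvd' with hB' | h
      · exact absurd (by
          rw [show ((X 1 : PolyS k) ^ 2 - X 0 * X 2) = -((X 0 : PolyS k) * X 2 - X 1 ^ 2) by ring,
            dvd_neg]
          exact hB') (g3_ndvd_g1 k)
      · exact h
    obtain ⟨d0, hd0⟩ := hdvd 0
    obtain ⟨d1, hd1⟩ := hdvd 1
    obtain ⟨d2, hd2⟩ := hdvd 2
    have hz : ((X 2 : PolyS k) ^ 2 - X 0 * X 1) * (d0 * (X 0 * X 1 - X 2 ^ 2)
        + d1 * (X 0 * X 2 - X 1 ^ 2) + d2 * (X 1 * X 2 - X 0 ^ 2) + 1) = 0 := by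
      linear_combination hsum - ((X 0 : PolyS k) * X 1 - X 2 ^ 2) * hd0
        - ((X 0 : PolyS k) * X 2 - X 1 ^ 2) * hd1 - ((X 1 : PolyS k) * X 2 - X 0 ^ 2) * hd2
    have hfin := (mul_eq_zero.mp hz).resolve_left (g3_ne k)
    apply one_notin k
    have h1 : (1 : PolyS k) = -(d0 * (X 0 * X 1 - X 2 ^ 2) + d1 * (X 0 * X 2 - X 1 ^ 2)
        + d2 * (X 1 * X 2 - X 0 ^ 2)) := by linear_combination hfin
    rw [h1]
    exact neg_mem (add_mem (add_mem (Ideal.mul_mem_left _ _ (A_mem k))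
      (Ideal.mul_mem_left _ _ (B_mem k))) (Ideal.mul_mem_left _ _ (C_mem k)))
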